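/- Let O_F be an F-order ideal with each O_i nonempty, and let t·f_i be an F-term. Then the O_F-index k = ind_{O_F}(t f_i) is the smallest natural number such that there exists a factorization t = t′·t″ in T^n with deg(t′) = k and t″·f_i ∈ O_F. -/

import Mathlib

open MvPolynomial

/-- An order ideal: a finite set of terms (exponent vectors), closed under divisors. -/
def IsOrderIdeal {n : ℕ} (O : Finset (Fin n →₀ ℕ)) : Prop :=
  ∀ t ∈ O, ∀ s : Fin n →₀ ℕ, s ≤ t → s ∈ O

/-- The degree of a term (exponent vector). -/
def termDeg {n : ℕ} (t : Fin n →₀ ℕ) : ℕ := t.sum fun _ e => e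

/-- The `F`-order ideal `O_F = O_1·f_1 ∪ ⋯ ∪ O_m·f_m`, encoded as the set of pairs
`(t, i)` with `t ∈ O_i`; a pair `(t, i)` represents the `F`-term `t·f_i`. -/
def fPairs {n m : ℕ} (O : Fin m → Finset (Fin n →₀ ℕ)) : Set ((Fin n →₀ ℕ) × Fin m) :=
  {p | p.1 ∈ O p.2}

/-- The border `∂S = (x_1·S ∪ ⋯ ∪ x_n·S) \ S` of a set `S` of `F`-terms. -/
def borderP {n m : ℕ} (S : Set ((Fin n →₀ ℕ) × Fin m)) : Set ((Fin n →₀ ℕ) × Fin m) :=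
  (⋃ j : Fin n, (fun p => (p.1 + Finsupp.single j 1, p.2)) '' S) \ S

/-- The `k`-th border closure: `∂̄⁰S = S` and `∂̄^{k+1}S = ∂̄^k S ∪ ∂(∂̄^k S)`. -/
def borderClosureP {n m : ℕ} (S : Set ((Fin n →₀ ℕ) × Fin m)) :
    ℕ → Set ((Fin n →₀ ℕ) × Fin m)
  | 0 => S
  | k + 1 => borderClosureP S k ∪ borderP (borderClosureP S k)

/-- The `O_F`-index of an `F`-term: `ind_{O_F}(t·f_i) = min {k | t·f_i ∈ ∂̄^k O_F}`. -/
noncomputable def indOF {n m : ℕ} (S : Set ((Fin n →₀ ℕ) × Fin m)) (p : (Fin n →₀ ℕ) × Fin m) : ℕ :=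
  sInf {k | p ∈ borderClosureP S k}


lemma termDeg_add {n : ℕ} (a b : Fin n →₀ ℕ) : termDeg (a + b) = termDeg a + termDeg b := by
  simpa [termDeg] using Finsupp.sum_add_index' (fun _ => rfl) (fun _ _ _ => rfl)

lemma termDeg_single {n : ℕ} (j : Fin n) : termDeg (Finsupp.single j 1) = 1 := by
  simp [termDeg, Finsupp.sum_single_index]

lemma termDeg_eq_zero {n : ℕ} {v : Fin n →₀ ℕ} (h : termDeg v = 0) : v = 0 := by
  ext j
  by_cases hj : j ∈ v.support
  · have := (Finset.sum_eq_zero_iff.mp h) j hj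
    simpa using this
  · simpa using Finsupp.notMem_support_iff.mp hj

lemma closure_subset_succ {n m : ℕ} (S : Set ((Fin n →₀ ℕ) × Fin m)) (k : ℕ) :
    borderClosureP S k ⊆ borderClosureP S (k + 1) := by
  intro p hp; exact Or.inl hp

lemma mem_closure_succ_of_mem {n m : ℕ} {S : Set ((Fin n →₀ ℕ) × Fin m)} {k : ℕ}
    {p : (Fin n →₀ ℕ) × Fin m} (hp : p ∈ borderClosureP S k) (j : Fin n) :
    (p.1 + Finsupp.single j 1, p.2) ∈ borderClosureP S (k + 1) := by
  by_cases h : (p.1 + Finsupp.single j 1, p.2) ∈ borderClosureP S k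
  · exact Or.inl h
  · refine Or.inr ⟨?_, h⟩
    exact Set.mem_iUnion.mpr ⟨j, ⟨p, hp, rfl⟩⟩

lemma mem_closure_of_decomp {n m : ℕ} {O : Fin m → Finset (Fin n →₀ ℕ)}
    {i : Fin m} {u : Fin n →₀ ℕ} (hu : u ∈ O i) :
    ∀ k (v : Fin n →₀ ℕ), termDeg v ≤ k → (u + v, i) ∈ borderClosureP (fPairs O) k := by
  intro k
  induction k with
  | zero =>
    intro v hv
    have : v = 0 := termDeg_eq_zero (Nat.le_zero.mp hv)
    subst this; simpa [fPairs, borderClosureP] using hu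
  | succ k ih =>
    intro v hv
    rcases Nat.lt_or_ge (termDeg v) (k+1) with h' | h'
    · exact closure_subset_succ _ _ (ih v (Nat.lt_succ_iff.mp h'))
    · have hvpos : 0 < termDeg v := by omega
      have hvne : v ≠ 0 := by
        intro h; rw [h] at hvpos; simp [termDeg] at hvpos
      obtain ⟨j, hj⟩ := Finsupp.ne_iff.mp hvne
      have hj1 : (1 : ℕ) ≤ v j := by simpa using Nat.one_le_iff_ne_zero.mpr (by simpa using hj)
      have hle : Finsupp.single j 1 ≤ v := Finsupp.single_le_iff.mpr hj1
      have hveq : (v - Finsupp.single j 1) + Finsupp.single j 1 = v :=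
        tsub_add_cancel_of_le hle
      have hdeg : termDeg (v - Finsupp.single j 1) ≤ k := by
        have := termDeg_add (v - Finsupp.single j 1) (Finsupp.single j 1)
        rw [hveq, termDeg_single] at this
        omega
      have := mem_closure_succ_of_mem (ih (v - Finsupp.single j 1) hdeg) j
      simpa [add_assoc, hveq] using this

lemma mem_closure_exists {n m : ℕ} {O : Fin m → Finset (Fin n →₀ ℕ)} :
    ∀ k (p : (Fin n →₀ ℕ) × Fin m), p ∈ borderClosureP (fPairs O) k →
      ∃ u, u ∈ O p.2 ∧ u ≤ p.1 ∧ termDeg (p.1 - u) ≤ k := by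
  intro k
  induction k with
  | zero =>
    intro p hp
    exact ⟨p.1, hp, le_rfl, by simp [termDeg]⟩
  | succ k ih =>
    intro p hp
    rcases hp with hp | hp
    · obtain ⟨u, h1, h2, h3⟩ := ih p hp
      exact ⟨u, h1, h2, h3.trans (Nat.le_succ k)⟩
    · obtain ⟨hmem, -⟩ := hp
      obtain ⟨j, hj⟩ := Set.mem_iUnion.mp hmem
      obtain ⟨q, hq, hpq⟩ := hj
      obtain ⟨u, h1, h2, h3⟩ := ih q hq
      refine ⟨u, by rw [← hpq]; exact h1, ?_, ?_⟩
      · rw [← hpq]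
        exact h2.trans (by simp)
      · rw [← hpq]
        have heq : q.1 + Finsupp.single j 1 - u = (q.1 - u) + Finsupp.single j 1 := by
          rw [add_comm q.1, add_comm (q.1 - u), add_tsub_assoc_of_le h2]
        rw [heq, termDeg_add, termDeg_single]
        omega


/-- The `O_F`-index of an `F`-term `t·f_i` is the smallest natural number `k` such that
there is a factorization `t = t'·t''` with `deg(t') = k` and `t''·f_i ∈ O_F`. -/
theorem stmt_9 {K : Type*} [Field K] {n m : ℕ}
    (f : Fin m → MvPolynomial (Fin n) K) (hf : ∀ i, f i ≠ 0)
    (O : Fin m → Finset (Fin n →₀ ℕ)) (hO : ∀ i, IsOrderIdeal (O i))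
    (hne : ∀ i, (O i).Nonempty)
    (t : Fin n →₀ ℕ) (i : Fin m) :
    IsLeast {k | ∃ t' t'' : Fin n →₀ ℕ,
        t = t' + t'' ∧ termDeg t' = k ∧ (t'', i) ∈ fPairs O}
      (indOF (fPairs O) (t, i)) := by
  classical
  set S := fPairs O
  have h0 : (0 : Fin n →₀ ℕ) ∈ O i := by
    obtain ⟨t0, ht0⟩ := hne i
    exact hO i t0 ht0 0 zero_le
  have hMne : (t, i) ∈ borderClosureP S (termDeg t) := by
    simpa using mem_closure_of_decomp h0 (termDeg t) t le_rfl
  have hmem : (t, i) ∈ borderClosureP S (indOF S (t, i)) := by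
    have : indOF S (t, i) ∈ {k | (t, i) ∈ borderClosureP S k} :=
      Nat.sInf_mem ⟨termDeg t, hMne⟩
    exact this
  constructor
  · obtain ⟨u, h1, h2, h3⟩ := mem_closure_exists _ (t, i) hmem
    have h3' : termDeg (t - u) ≤ indOF S (t, i) := h3
    have hd : (t, i) ∈ borderClosureP S (termDeg (t - u)) := by
      have := mem_closure_of_decomp h1 (termDeg (t - u)) (t - u) le_rfl
      simpa [add_comm u, tsub_add_cancel_of_le h2] using this
    have hle : indOF S (t, i) ≤ termDeg (t - u) := Nat.sInf_le (by exact hd)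
    refine ⟨t - u, u, ?_, by omega, h1⟩
    rw [tsub_add_cancel_of_le h2]
  · rintro k ⟨t', t'', rfl, hdeg, hmem'⟩
    refine Nat.sInf_le ?_
    have := mem_closure_of_decomp hmem' k t' (le_of_eq hdeg)
    simpa [add_comm] using this
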